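/- For all m,n ≥ 0 and a_1,…,a_m, b_1,…,b_n ∈ Σ, the assignment f ↦ (f, f̃), where f̃(a_i,i) = (a_i, f̄^{-1}(i)), is a bijection from the set of injective adjacency-preserving maps f : {0,1}^m → {0,1}^n satisfying the label compatibility a_i = b_{f̄^{-1}(i)} for all i ∈ {1,…,m}, onto the set of morphisms of weak higher dimensional transition systems C_m[a_1,…,a_m] → C_n[b_1,…,b_n]. (In particular, the full subcategory of labelled cubes in labelled symmetric precubical sets is isomorphic to the full subcategory of labelled cubes in weak higher dimensional transition systems.) -/

import Mathlib

/-- An adjacency-preserving map between cubes: strictly increasing (for the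
product order) and taking pairs at Hamming distance 1 to pairs at Hamming
distance 1. -/
def AdjPreserving {m n : ℕ} (f : (Fin m → Bool) → (Fin n → Bool)) : Prop :=
  StrictMono f ∧ ∀ ε ε' : Fin m → Bool,
    hammingDist ε ε' = 1 → hammingDist (f ε) (f ε') = 1

/-- Evaluation of a "generalized index" in `{1,…,m} ∪ {−∞,+∞}` (encoded as
`Fin m ⊕ Bool`, with `Sum.inr false = −∞` and `Sum.inr true = +∞`) on a vertex
`ε ∈ {0,1}^m`, with the conventions `ε_{−∞} = 0` and `ε_{+∞} = 1`. -/
def evalIdx {m : ℕ} (ε : Fin m → Bool) : Fin m ⊕ Bool → Bool :=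
  Sum.elim ε id
universe u u1 u2 u3 u4 u5 u6

/-- A transition structure over the set of labels `Λ`: a set of states `S`, a
set of actions `L`, a labelling map `μ : L → Λ`, and a set of transitions
`(α, u_1, …, u_n, β)` encoded as `T α [u_1, …, u_n] β`. Weak higher dimensional
transition systems are the transition structures whose transitions have
nonempty lists of actions and satisfying the Multiset and Coherence axioms. -/
structure TransSys (Λ : Type u) where
  /-- the states -/
  S : Type u1
  /-- the actions -/
  L : Type u2
  /-- the labelling map -/
  μ : L → Λ
  /-- the transitions -/
  T : S → List L → S → Prop

/-- A morphism of (weak higher dimensional) transition systems: a pair of set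
maps on states and actions commuting with the labelling maps and taking
transitions to transitions. -/
structure TransSys.Hom {Λ : Type u} (X : TransSys.{u, u1, u2} Λ)
    (Y : TransSys.{u, u3, u4} Λ) where
  /-- the map on states -/
  f0 : X.S → Y.S
  /-- the map on actions -/
  fa : X.L → Y.L
  label : ∀ x, Y.μ (fa x) = X.μ x
  map : ∀ (α : X.S) (l : List X.L) (β : X.S), X.T α l β → Y.T (f0 α) (l.map fa) (f0 β)

/-- Composition of morphisms of transition systems. -/
def TransSys.Hom.comp {Λ : Type u} {X : TransSys.{u, u1, u2} Λ}
    {Y : TransSys.{u, u3, u4} Λ} {Z : TransSys.{u, u5, u6} Λ}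
    (g : Y.Hom Z) (f : X.Hom Y) : X.Hom Z where
  f0 := fun x => g.f0 (f.f0 x)
  fa := fun x => g.fa (f.fa x)
  label := fun x => (g.label (f.fa x)).trans (f.label x)
  map := fun α l β h => by
    have h2 := g.map _ _ _ (f.map α l β h)
    rw [List.map_map] at h2
    exact h2

/-- The set of transitions of the cube `C_n[a_1,…,a_n]`: the states are the
elements of `{0,1}^n`, the actions are the indices `i ∈ {1,…,n}` (the action
`i` standing for the pair `(a_i, i)`, labelled by `a_i`). -/
@[reducible] def CubeT (n : ℕ) (ε : Fin n → Bool) (l : List (Fin n)) (ε' : Fin n → Bool) :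
    Prop :=
  l ≠ [] ∧ l.Nodup ∧ (∀ i, ε i ≤ ε' i) ∧ ∀ i : Fin n, ε i ≠ ε' i ↔ i ∈ l

/-- The cube `C_n[a_1,…,a_n]` as a (weak higher dimensional) transition
system. -/
@[reducible] def cube {Λ : Type u} (n : ℕ) (a : Fin n → Λ) : TransSys.{u, 0, 0} Λ where
  S := Fin n → Bool
  L := Fin n
  μ := a
  T := CubeT n

/-- `s : {1,…,m} → {1,…,n}` is the inverse index map `f̄⁻¹` of
`f : {0,1}^m → {0,1}^n`: the coordinate `s j` of `f ε` is `ε j`, and every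
coordinate of `f` is either constant (index `−∞` or `+∞`) or of the form
`s j`. -/
def IsIndexInv {m n : ℕ} (f : (Fin m → Bool) → (Fin n → Bool))
    (s : Fin m → Fin n) : Prop :=
  (∀ (ε : Fin m → Bool) (j : Fin m), f ε (s j) = ε j) ∧
    ∀ k : Fin n, (∀ ε ε' : Fin m → Bool, f ε k = f ε' k) ∨ ∃ j, s j = k

section Aux

variable {m n : ℕ}

lemma eq_of_eval_eq {j j' : Fin m} (h : ∀ ε : Fin m → Bool, ε j' = ε j) : j' = j := by
  have := h (fun i => decide (i = j))
  simpa using this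

lemma IsIndexInv.inj {f : (Fin m → Bool) → (Fin n → Bool)} {s : Fin m → Fin n}
    (h : IsIndexInv f s) : Function.Injective s := by
  intro j j' hjj'
  refine Eq.symm (eq_of_eval_eq fun ε => ?_)
  have h1 := h.1 ε j
  have h2 := h.1 ε j'
  rw [hjj'] at h1
  exact h2.symm.trans h1

lemma IsIndexInv.ne_imp {f : (Fin m → Bool) → (Fin n → Bool)} {s : Fin m → Fin n}
    (h : IsIndexInv f s) {ε ε' : Fin m → Bool} {k : Fin n} (hne : f ε k ≠ f ε' k) :
    ∃ j, s j = k ∧ ε j ≠ ε' j := by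
  rcases h.2 k with hc | ⟨j, rfl⟩
  · exact absurd (hc ε ε') hne
  · exact ⟨j, rfl, by rwa [h.1 ε j, h.1 ε' j] at hne⟩

lemma IsIndexInv.unique {f : (Fin m → Bool) → (Fin n → Bool)} {s s' : Fin m → Fin n}
    (h : IsIndexInv f s) (h' : IsIndexInv f s') : s = s' := by
  funext j
  rcases h'.2 (s j) with hc | ⟨j', hj'⟩
  · exfalso
    have h1 := h.1 (fun _ => false) j
    have h2 := h.1 (fun _ => true) j
    rw [hc (fun _ => false) (fun _ => true)] at h1
    rw [h1] at h2
    simp at h2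
  · have : j' = j := by
      apply eq_of_eval_eq
      intro ε
      have := h'.1 ε j'
      rw [hj'] at this
      rw [← this, h.1 ε j]
    rw [← hj', this]

lemma IsIndexInv.hamming {f : (Fin m → Bool) → (Fin n → Bool)} {s : Fin m → Fin n}
    (h : IsIndexInv f s) (ε ε' : Fin m → Bool) :
    hammingDist (f ε) (f ε') = hammingDist ε ε' := by
  have hset : ({k | f ε k ≠ f ε' k} : Finset (Fin n)) =
      ({j | ε j ≠ ε' j} : Finset (Fin m)).image s := by
    ext k
    simp only [Finset.mem_filter, Finset.mem_image, Finset.mem_univ, true_and]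
    constructor
    · intro hk
      obtain ⟨j, rfl, hj⟩ := h.ne_imp hk
      exact ⟨j, hj, rfl⟩
    · rintro ⟨j, hj, rfl⟩
      rw [h.1 ε j, h.1 ε' j]
      exact hj
  unfold hammingDist
  rw [hset, Finset.card_image_of_injective _ h.inj]

lemma IsIndexInv.injective {f : (Fin m → Bool) → (Fin n → Bool)} {s : Fin m → Fin n}
    (h : IsIndexInv f s) : Function.Injective f := by
  intro ε ε' he
  funext j
  have := h.1 ε j
  rw [he, h.1 ε' j] at this
  exact this.symm

lemma IsIndexInv.adj {f : (Fin m → Bool) → (Fin n → Bool)} {s : Fin m → Fin n}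
    (h : IsIndexInv f s) : AdjPreserving f := by
  constructor
  · apply Monotone.strictMono_of_injective _ h.injective
    intro ε ε' hle k
    rcases h.2 k with hc | ⟨j, rfl⟩
    · rw [hc ε ε']
    · rw [h.1 ε j, h.1 ε' j]
      exact hle j
  · intro ε ε' hd
    rw [h.hamming, hd]

lemma IsIndexInv.mapT {f : (Fin m → Bool) → (Fin n → Bool)} {s : Fin m → Fin n}
    (h : IsIndexInv f s) {ε ε' : Fin m → Bool} {l : List (Fin m)}
    (ht : CubeT m ε l ε') : CubeT n (f ε) (l.map s) (f ε') := by
  obtain ⟨hne, hnd, hle, hiff⟩ := ht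
  refine ⟨by simpa using hne, List.Nodup.map h.inj hnd, ?_, ?_⟩
  · intro k
    rcases h.2 k with hc | ⟨j, rfl⟩
    · rw [hc ε ε']
    · rw [h.1 ε j, h.1 ε' j]
      exact hle j
  · intro k
    constructor
    · intro hk
      obtain ⟨j, rfl, hj⟩ := h.ne_imp hk
      exact List.mem_map_of_mem (f := s) ((hiff j).1 hj)
    · intro hk
      obtain ⟨j, hj, rfl⟩ := List.mem_map.1 hk
      rw [h.1 ε j, h.1 ε' j]
      exact (hiff j).2 hj

variable {Λ : Type u} {a : Fin m → Λ} {b : Fin n → Λ}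

lemma hom_step (h : (cube m a).Hom (cube n b)) (ε : Fin m → Bool) (j : Fin m)
    (hj : ε j = false) :
    (∀ k, k ≠ h.fa j → h.f0 ε k = h.f0 (Function.update ε j true) k) ∧
      h.f0 ε (h.fa j) = false ∧ h.f0 (Function.update ε j true) (h.fa j) = true := by
  have ht : CubeT m ε [j] (Function.update ε j true) := by
    refine ⟨by simp, by simp, ?_, ?_⟩
    · intro i
      by_cases hij : i = j
      · subst hij; simp [hj]
      · simp [Function.update_of_ne hij]
    · intro i
      by_cases hij : i = j
      · subst hij; simp [hj]
      · simp [Function.update_of_ne hij, hij]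
  have hm := h.map ε [j] _ ht
  obtain ⟨-, -, hle, hiff⟩ := hm
  have hne : h.f0 ε (h.fa j) ≠ h.f0 (Function.update ε j true) (h.fa j) := by
    rw [hiff]; simp
  refine ⟨?_, ?_, ?_⟩
  · intro k hk
    by_contra hc
    have := (hiff k).1 hc
    simp at this
    exact hk this
  · cases hε : h.f0 ε (h.fa j) with
    | false => rfl
    | true =>
      exfalso
      have := hle (h.fa j)
      rw [hε] at this
      cases hε' : h.f0 (Function.update ε j true) (h.fa j)
      · rw [hε'] at this; exact absurd this (by simp)
      · rw [hε, hε'] at hne; exact hne rfl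
  · cases hε' : h.f0 (Function.update ε j true) (h.fa j) with
    | true => rfl
    | false =>
      exfalso
      have := hle (h.fa j)
      rw [hε'] at this
      have hε : h.f0 ε (h.fa j) = false := by
        cases hε : h.f0 ε (h.fa j)
        · rfl
        · rw [hε] at this; exact absurd this (by simp)
      rw [hε, hε'] at hne
      exact hne rfl

lemma hom_indexInv (h : (cube m a).Hom (cube n b)) : IsIndexInv h.f0 h.fa := by
  constructor
  · intro ε j
    cases hεj : ε j with
    | false => exact (hom_step h ε j hεj).2.1
    | true =>
      have hε : Function.update (Function.update ε j false) j true = ε := by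
        funext i
        by_cases hij : i = j
        · subst hij; simp [hεj]
        · simp [Function.update_of_ne hij]
      have := (hom_step h (Function.update ε j false) j (by simp)).2.2
      rw [hε] at this
      rw [this]
  · intro k
    by_cases hk : ∃ j, h.fa j = k
    · exact Or.inr hk
    · left
      push_neg at hk
      suffices H : ∀ ε, h.f0 ε k = h.f0 (fun _ => false) k by
        intro ε ε'; rw [H ε, H ε']
      have key : ∀ t (ε : Fin m → Bool), ({j | ε j = true} : Finset (Fin m)).card ≤ t →
          h.f0 ε k = h.f0 (fun _ => false) k := by
        intro t
        induction t with
        | zero =>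
          intro ε hε
          have : ε = fun _ => false := by
            funext i
            by_contra hi
            have hi' : ε i = true := by
              cases h : ε i
              · exact absurd h hi
              · rfl
            have : i ∈ ({j | ε j = true} : Finset (Fin m)) := by simpa using hi'
            have := Finset.card_pos.2 ⟨i, this⟩
            omega
          rw [this]
        | succ t ih =>
          intro ε hε
          by_cases h0 : ε = fun _ => false
          · rw [h0]
          · obtain ⟨j, hj⟩ : ∃ j, ε j = true := by
              by_contra hc
              push_neg at hc
              apply h0
              funext i
              have := hc i
              cases h : ε i
              · rfl
              · exact absurd h this
            have hεe : Function.update (Function.update ε j false) j true = ε := by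
              funext i
              by_cases hij : i = j
              · subst hij; simp [hj]
              · simp [Function.update_of_ne hij]
            have hst := hom_step h (Function.update ε j false) j (by simp)
            have h1 : h.f0 (Function.update ε j false) k = h.f0 ε k := by
              have := hst.1 k (fun hc => hk j hc.symm)
              rwa [hεe] at this
            have hsub : ({i | Function.update ε j false i = true} : Finset (Fin m)) =
                ({i | ε i = true} : Finset (Fin m)).erase j := by
              ext i
              by_cases hij : i = j
              · subst hij; simp
              · simp [Function.update_of_ne hij, hij]
            have hmem : j ∈ ({i | ε i = true} : Finset (Fin m)) := by simpa using hj
            have hcard : ({i | Function.update ε j false i = true} : Finset (Fin m)).card ≤ t := by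
              rw [hsub, Finset.card_erase_of_mem hmem]
              omega
            rw [← h1]
            exact ih _ hcard
      intro ε
      exact key _ ε le_rfl

lemma hom_ext {X : TransSys.{u, u1, u2} Λ} {Y : TransSys.{u, u3, u4} Λ}
    {h h' : X.Hom Y} (h0 : h.f0 = h'.f0) (ha : h.fa = h'.fa) : h = h' := by
  cases h; cases h'
  simp only at h0 ha
  subst h0; subst ha
  rfl

end Aux

/-- The assignment `f ↦ (f, f̃)`, where `f̃(a_i,i) = (a_i, f̄⁻¹(i))`, is a
bijection from the set of injective adjacency-preserving maps
`f : {0,1}^m → {0,1}^n` satisfying the label compatibility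
`a_i = b_{f̄⁻¹(i)}` onto the set of morphisms of weak higher dimensional
transition systems `C_m[a_1,…,a_m] → C_n[b_1,…,b_n]`. -/
theorem cubes_equiv {Λ : Type u} (m n : ℕ) (a : Fin m → Λ) (b : Fin n → Λ) :
    ∃ e : {f : (Fin m → Bool) → (Fin n → Bool) //
        AdjPreserving f ∧ Function.Injective f ∧
          ∃ s : Fin m → Fin n, IsIndexInv f s ∧ ∀ j, a j = b (s j)} ≃
        (cube m a).Hom (cube n b),
      ∀ x, (e x).f0 = x.1 ∧ ∀ s : Fin m → Fin n, IsIndexInv x.1 s → (e x).fa = s := by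
  classical
  refine ⟨⟨fun x =>
    { f0 := x.1
      fa := x.2.2.2.choose
      label := fun j => (x.2.2.2.choose_spec.2 j).symm
      map := fun α l β ht => x.2.2.2.choose_spec.1.mapT ht },
    fun h => ⟨h.f0, (hom_indexInv h).adj, (hom_indexInv h).injective,
      h.fa, hom_indexInv h, fun j => (h.label j).symm⟩,
    ?_, ?_⟩, ?_⟩
  · intro x
    exact Subtype.ext rfl
  · intro h
    refine hom_ext rfl ?_
    exact IsIndexInv.unique
      (f := h.f0)
      (Exists.choose_spec (p := fun s => IsIndexInv h.f0 s ∧ ∀ j, a j = b (s j))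
        ⟨h.fa, hom_indexInv h, fun j => (h.label j).symm⟩).1 (hom_indexInv h)
  · intro x
    refine ⟨rfl, fun s hs => ?_⟩
    exact IsIndexInv.unique x.2.2.2.choose_spec.1 hs
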